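/- Let M be a finitely generated semigroup acting on the right on a compact metric space X by continuous maps, expansively. If every point of X has a finite inverse orbit (the inverse orbit of x is {y ∈ X : x ∈ y·M}), then X is finite. -/

import Mathlib

open scoped Pointwise
open Filter Topology

/-- `spow S n` is the set `Sⁿ` of products of `n` elements of `S` (empty for `n = 0`). -/
def spow {M : Type*} [Mul M] (S : Set M) : ℕ → Set M
  | 0 => ∅
  | 1 => S
  | n + 2 => spow S (n + 1) * S

section Aux

variable {M X : Type*} [Semigroup M] [MetricSpace X]

/-- Run a list of semigroup elements on a point, left to right. -/
def runAct (act : X → M → X) (x : X) (l : List M) : X := l.foldl act x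

variable (act : X → M → X)

@[simp] lemma runAct_nil (x : X) : runAct act x [] = x := rfl

@[simp] lemma runAct_cons (x : X) (s : M) (l : List M) :
    runAct act x (s :: l) = runAct act (act x s) l := rfl

lemma runAct_append (x : X) (l₁ l₂ : List M) :
    runAct act x (l₁ ++ l₂) = runAct act (runAct act x l₁) l₂ := by
  simp [runAct, List.foldl_append]

lemma continuous_runAct (hc : ∀ m : M, Continuous fun x : X => act x m) (l : List M) :
    Continuous fun x : X => runAct act x l := by
  induction l with
  | nil => simpa using continuous_id'
  | cons s t ih => exact ih.comp (hc s)

lemma take_succ_getD {α : Type*} (l : List α) (i : ℕ) (h : i < l.length) (d : α) :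
    l.take (i + 1) = l.take i ++ [l.getD i d] := by
  induction l generalizing i with
  | nil => simp at h
  | cons a t ih =>
    cases i with
    | zero => simp
    | succ k =>
      simp only [List.take_succ_cons, List.getD_cons_succ, List.cons_append]
      rw [ih k (by simpa using h)]

lemma spow_list (hact : ∀ (x : X) (m n : M), act (act x m) n = act x (m * n))
    (S : Set M) : ∀ (n : ℕ) (m : M), m ∈ spow S n →
    ∃ l : List M, (∀ s ∈ l, s ∈ S) ∧ l.length = n ∧ ∀ x : X, act x m = runAct act x l := by
  intro n
  induction n using Nat.strong_induction_on with
  | _ n ih =>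
    match n with
    | 0 => exact fun m hm => absurd hm (by simp [spow])
    | 1 =>
      intro m hm
      refine ⟨[m], ?_, rfl, fun x => rfl⟩
      intro s hs
      rw [List.mem_singleton] at hs
      subst hs
      exact hm
    | (k + 2) =>
      intro m hm
      rcases Set.mem_mul.mp hm with ⟨a, ha, b, hb, rfl⟩
      obtain ⟨l, hl, hlen, hrun⟩ := ih (k + 1) (by omega) a ha
      refine ⟨l ++ [b], ?_, by simp [hlen], fun x => ?_⟩
      · intro s hs
        rcases List.mem_append.mp hs with h | h
        · exact hl s h
        · rw [List.mem_singleton] at h; subst h; exact hb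
      · rw [runAct_append, ← hrun x]
        show act x (a * b) = act (act x a) b
        rw [hact]

end Aux

theorem stmt_10 {M X : Type*} [Semigroup M] [MetricSpace X] [CompactSpace X]
    (act : X → M → X) (hact : ∀ (x : X) (m n : M), act (act x m) n = act x (m * n))
    (hc : ∀ m : M, Continuous fun x : X => act x m)
    (S : Finset M) (hgen : ∀ m : M, ∃ n : ℕ, m ∈ spow (S : Set M) n)
    (hexp : ∃ ε > (0 : ℝ), ∀ x y : X, x ≠ y → ∃ m : M, ε < dist (act x m) (act y m))
    (hinv : ∀ x : X, {y : X | ∃ m : M, act y m = x}.Finite) :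
    Finite X := by
  classical
  by_contra hX
  obtain ⟨ε, hε, hE⟩ := hexp
  -- there is a non-isolated point
  have hai : ∃ a : X, (𝓝[≠] a).NeBot := by
    by_contra h
    push_neg at h
    have hd : DiscreteTopology X := discreteTopology_iff_nhds_ne.mpr
      (fun a => h a)
    exact hX finite_of_compact_of_discrete
  obtain ⟨a, hNB⟩ := hai
  -- a sequence of points distinct from `a` converging to `a`
  have hy : ∀ n : ℕ, ∃ z : X, z ≠ a ∧ dist z a < 1 / (n + 1) := by
    intro n
    have h1 : (0 : ℝ) < 1 / (n + 1) := by positivity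
    have hmem : Metric.ball a (1 / (n + 1)) ∩ {a}ᶜ ∈ 𝓝[≠] a :=
      Filter.inter_mem (nhdsWithin_le_nhds (Metric.ball_mem_nhds a h1))
        (Filter.mem_inf_of_right (Filter.mem_principal_self _))
    obtain ⟨z, hz⟩ := Filter.nonempty_of_mem hmem
    exact ⟨z, hz.2, by simpa [Metric.mem_ball] using hz.1⟩
  choose y hya hyd using hy
  have hytend : Filter.Tendsto y Filter.atTop (𝓝 a) := by
    rw [tendsto_iff_dist_tendsto_zero]
    apply squeeze_zero (fun n => dist_nonneg) (fun n => (hyd n).le)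
    exact tendsto_one_div_add_atTop_nhds_zero_nat
  -- minimal separating words
  have hsep : ∀ x z : X, x ≠ z → ∃ k : ℕ, ∃ l : List M,
      (∀ s ∈ l, s ∈ (S : Set M)) ∧ l.length = k ∧
      ε < dist (runAct act x l) (runAct act z l) := by
    intro x z hxz
    obtain ⟨m, hm⟩ := hE x z hxz
    obtain ⟨k, hk⟩ := hgen m
    obtain ⟨l, hl, hlen, hrun⟩ := spow_list act hact (S : Set M) k m hk
    exact ⟨k, l, hl, hlen, by rw [← hrun x, ← hrun z]; exact hm⟩
  have H : ∀ n : ℕ, ∃ k : ℕ, ∃ l : List M,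
      (∀ s ∈ l, s ∈ (S : Set M)) ∧ l.length = k ∧
      ε < dist (runAct act a l) (runAct act (y n) l) :=
    fun n => hsep a (y n) (Ne.symm (hya n))
  set L : ℕ → ℕ := fun n => Nat.find (H n) with hLdef
  choose w hwS hwlen0 hwd using fun n => Nat.find_spec (H n)
  have hwlen : ∀ n : ℕ, (w n).length = L n := fun n => hwlen0 n
  have hmin : ∀ (n k : ℕ), k < L n → ∀ l : List M, (∀ s ∈ l, s ∈ (S : Set M)) →
      l.length = k → dist (runAct act a l) (runAct act (y n) l) ≤ ε := by
    intro n k hk l hl hlen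
    by_contra h
    push_neg at h
    exact Nat.find_min (H n) hk ⟨l, hl, hlen, h⟩
  -- uniform eventual closeness of orbits for words up to a given length
  have Q : ∀ (L0 : ℕ) (x : X), ∀ᶠ z in 𝓝 x, ∀ l : List M,
      (∀ s ∈ l, s ∈ (S : Set M)) → l.length ≤ L0 →
      dist (runAct act x l) (runAct act z l) ≤ ε := by
    intro L0
    induction L0 with
    | zero =>
      intro x
      filter_upwards [Metric.closedBall_mem_nhds x hε] with z hz l hl hlen
      have hnil : l = [] := List.eq_nil_of_length_eq_zero (Nat.le_zero.mp hlen)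
      subst hnil
      simpa [dist_comm] using hz
    | succ k ih =>
      intro x
      have hS : ∀ s ∈ S, ∀ᶠ z in 𝓝 x, ∀ l : List M,
          (∀ s' ∈ l, s' ∈ (S : Set M)) → l.length ≤ k →
          dist (runAct act (act x s) l) (runAct act (act z s) l) ≤ ε := by
        intro s _
        exact ((hc s).continuousAt (x := x)).eventually (ih (act x s))
      have hall := (Filter.eventually_all_finset S).mpr hS
      filter_upwards [hall, Metric.closedBall_mem_nhds x hε] with z hz hzb
      intro l hl hlen
      match l with
      | [] => simpa [dist_comm] using hzb
      | s :: t =>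
        have hs : s ∈ S := hl s List.mem_cons_self
        have ht : t.length ≤ k := by simpa using Nat.succ_le_succ_iff.mp (by simpa using hlen)
        exact hz s hs t (fun s' hs' => hl s' (List.mem_cons_of_mem _ hs')) ht
  -- lengths go to infinity
  have hLinf : Filter.Tendsto L Filter.atTop Filter.atTop := by
    rw [Filter.tendsto_atTop]
    intro b
    filter_upwards [hytend.eventually (Q b a)] with n hn
    by_contra hb
    push_neg at hb
    have h2 := hn (w n) (hwS n) (by rw [hwlen n]; omega)
    linarith [hwd n]
  -- an ultrafilter extending atTop
  set U : Ultrafilter ℕ := Ultrafilter.of Filter.atTop with hUdef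
  have hU : (U : Filter ℕ) ≤ Filter.atTop := Ultrafilter.of_le _
  obtain ⟨m₀, -⟩ := hE (y 0) a (hya 0)
  -- the points along the prefixes, indexed from the end
  set Uu : ℕ → ℕ → X := fun j n => runAct act a ((w n).take (L n - j)) with hUu
  set Vv : ℕ → ℕ → X := fun j n => runAct act (y n) ((w n).take (L n - j)) with hVv
  have hlim : ∀ g : ℕ → X, ∃ p : X, Filter.Tendsto g (U : Filter ℕ) (𝓝 p) := by
    intro g
    obtain ⟨p, -, hp⟩ := isCompact_univ.ultrafilter_le_nhds (U.map g)
      (by simp [Filter.le_principal_iff])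
    exact ⟨p, hp⟩
  choose u hu using fun j => hlim (Uu j)
  choose v hv using fun j => hlim (Vv j)
  -- the letters, indexed from the end
  have hlet : ∀ j : ℕ, ∃ c : M, {n : ℕ | (w n).getD (L n - j - 1) m₀ = c} ∈ (U : Filter ℕ) := by
    intro j
    have hfin : (insert m₀ (S : Set M)).Finite := (S.finite_toSet).insert m₀
    have hmem : insert m₀ (S : Set M) ∈ U.map (fun n => (w n).getD (L n - j - 1) m₀) := by
      have hall : ∀ n : ℕ, (w n).getD (L n - j - 1) m₀ ∈ insert m₀ (S : Set M) := by
        intro n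
        by_cases hlt : L n - j - 1 < (w n).length
        · refine Set.mem_insert_of_mem _ (hwS n _ ?_)
          rw [List.getD_eq_getElem (w n) m₀ hlt]
          exact List.getElem_mem hlt
        · rw [List.getD_eq_default _ _ (le_of_not_gt hlt)]
          exact Set.mem_insert _ _
      exact Filter.mem_map.mpr (Filter.univ_mem' hall)
    obtain ⟨c, -, hc2⟩ := Ultrafilter.eq_pure_of_finite_mem hfin hmem
    refine ⟨c, ?_⟩
    have hcm : {c} ∈ U.map (fun n => (w n).getD (L n - j - 1) m₀) := by
      rw [hc2]; exact Filter.mem_pure.mpr rfl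
    exact Filter.mem_map.mp hcm
  choose cc hcc using hlet
  have hBmem : ∀ j : ℕ, {n : ℕ | j < L n} ∈ (U : Filter ℕ) := by
    intro j
    apply hU
    have := (Filter.tendsto_atTop.mp hLinf) (j + 1)
    filter_upwards [this] with n hn
    omega
  -- chain relations
  have hchain : ∀ j : ℕ, u j = act (u (j + 1)) (cc j) ∧ v j = act (v (j + 1)) (cc j) := by
    intro j
    have hkey : ∀ n : ℕ, j < L n → (w n).getD (L n - j - 1) m₀ = cc j →
        Uu j n = act (Uu (j + 1) n) (cc j) ∧ Vv j n = act (Vv (j + 1) n) (cc j) := by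
      intro n hjn hw'
      have hlt : L n - j - 1 < (w n).length := by rw [hwlen n]; omega
      have htake : (w n).take (L n - j) =
          (w n).take (L n - (j + 1)) ++ [cc j] := by
        have h1 : L n - j = (L n - j - 1) + 1 := by omega
        have h2 : L n - (j + 1) = L n - j - 1 := by omega
        rw [h1, h2, take_succ_getD (w n) _ hlt m₀, hw']
      constructor
      · rw [hUu]
        simp only []
        rw [htake, runAct_append]
        rfl
      · rw [hVv]
        simp only []
        rw [htake, runAct_append]
        rfl
    have hev : {n : ℕ | Uu j n = act (Uu (j + 1) n) (cc j)
        ∧ Vv j n = act (Vv (j + 1) n) (cc j)} ∈ (U : Filter ℕ) := by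
      filter_upwards [hBmem j, hcc j] with n h1 h2
      exact hkey n h1 h2
    have tU : Filter.Tendsto (fun n => act (Uu (j + 1) n) (cc j)) (U : Filter ℕ)
        (𝓝 (act (u (j + 1)) (cc j))) := (((hc (cc j)).tendsto _).comp (hu (j + 1)))
    have tV : Filter.Tendsto (fun n => act (Vv (j + 1) n) (cc j)) (U : Filter ℕ)
        (𝓝 (act (v (j + 1)) (cc j))) := (((hc (cc j)).tendsto _).comp (hv (j + 1)))
    constructor
    · refine tendsto_nhds_unique (hu j) (tU.congr' ?_)
      filter_upwards [hev] with n hn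
      exact hn.1.symm
    · refine tendsto_nhds_unique (hv j) (tV.congr' ?_)
      filter_upwards [hev] with n hn
      exact hn.2.symm
  -- separation of the limit pair at level 0
  have hd0 : ε ≤ dist (u 0) (v 0) := by
    refine ge_of_tendsto ((hu 0).dist (hv 0)) ?_
    refine Filter.Eventually.of_forall (fun n => ?_)
    have h0 : Uu 0 n = runAct act a (w n) := by
      rw [hUu]; simp only [Nat.sub_zero]
      rw [← hwlen n, List.take_length]
    have h0' : Vv 0 n = runAct act (y n) (w n) := by
      rw [hVv]; simp only [Nat.sub_zero]
      rw [← hwlen n, List.take_length]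
    rw [h0, h0']
    exact (hwd n).le
  have hne0 : u 0 ≠ v 0 := by
    intro h
    rw [h, dist_self] at hd0
    linarith
  -- tightness of the limit pairs
  have tight : ∀ (j : ℕ) (l : List M), (∀ s ∈ l, s ∈ (S : Set M)) → l.length < j →
      dist (runAct act (u j) l) (runAct act (v j) l) ≤ ε := by
    intro j l hl hlen
    have hev : {n : ℕ | dist (runAct act (Uu j n) l) (runAct act (Vv j n) l) ≤ ε}
        ∈ (U : Filter ℕ) := by
      filter_upwards [hBmem j] with n hn
      have h1 : runAct act (Uu j n) l = runAct act a ((w n).take (L n - j) ++ l) :=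
        (runAct_append act a _ l).symm
      have h2 : runAct act (Vv j n) l = runAct act (y n) ((w n).take (L n - j) ++ l) :=
        (runAct_append act (y n) _ l).symm
      rw [h1, h2]
      refine hmin n ((L n - j) + l.length) (by omega) _ ?_ ?_
      · intro s hs
        rcases List.mem_append.mp hs with h | h
        · exact hwS n s (List.take_subset _ _ h)
        · exact hl s h
      · rw [List.length_append, List.length_take, hwlen n]
        omega
    have t1 : Filter.Tendsto (fun n => dist (runAct act (Uu j n) l)
        (runAct act (Vv j n) l)) (U : Filter ℕ)
        (𝓝 (dist (runAct act (u j) l) (runAct act (v j) l))) :=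
      (((continuous_runAct act hc l).tendsto _).comp (hu j)).dist
        (((continuous_runAct act hc l).tendsto _).comp (hv j))
    exact le_of_tendsto t1 hev
  -- products of the letters
  set mm : ℕ → M := fun j => Nat.rec (cc 0) (fun j m => cc (j + 1) * m) j with hmm
  have hmmU : ∀ j : ℕ, act (u (j + 1)) (mm j) = u 0 ∧ act (v (j + 1)) (mm j) = v 0 := by
    intro j
    induction j with
    | zero => exact ⟨(hchain 0).1.symm, (hchain 0).2.symm⟩
    | succ k ih =>
      have h1 : mm (k + 1) = cc (k + 1) * mm k := rfl
      constructor
      · rw [h1, ← hact, ← (hchain (k + 1)).1]; exact ih.1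
      · rw [h1, ← hact, ← (hchain (k + 1)).2]; exact ih.2
  -- pigeonhole: some pair value occurs for infinitely many indices
  have hfinP : ({z : X | ∃ m : M, act z m = u 0} ×ˢ {z : X | ∃ m : M, act z m = v 0}).Finite :=
    (hinv (u 0)).prod (hinv (v 0))
  have hmaps : ∀ j : ℕ, (u (j + 1), v (j + 1)) ∈
      ({z : X | ∃ m : M, act z m = u 0} ×ˢ {z : X | ∃ m : M, act z m = v 0}) :=
    fun j => ⟨⟨mm j, (hmmU j).1⟩, ⟨mm j, (hmmU j).2⟩⟩
  have hpigeon : ∃ p : X × X, {j : ℕ | (u (j + 1), v (j + 1)) = p}.Infinite := by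
    by_contra hcon
    push_neg at hcon
    have hsub : (Set.univ : Set ℕ) ⊆
        ⋃ p ∈ ({z : X | ∃ m : M, act z m = u 0} ×ˢ {z : X | ∃ m : M, act z m = v 0}),
          {j : ℕ | (u (j + 1), v (j + 1)) = p} :=
      fun j _ => Set.mem_biUnion (hmaps j) rfl
    have : (Set.univ : Set ℕ).Finite :=
      (hfinP.biUnion (fun p _ => hcon p)).subset hsub
    exact Set.infinite_univ this
  obtain ⟨⟨uu, vv⟩, hinf⟩ := hpigeon
  obtain ⟨j₀, hj₀⟩ := hinf.nonempty
  have hj₀' : u (j₀ + 1) = uu ∧ v (j₀ + 1) = vv := Prod.mk.injEq .. ▸ hj₀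
  have hneuv : uu ≠ vv := by
    intro h
    apply hne0
    rw [← (hmmU j₀).1, ← (hmmU j₀).2, hj₀'.1, hj₀'.2, h]
  obtain ⟨m, hm⟩ := hE uu vv hneuv
  obtain ⟨k, hk⟩ := hgen m
  obtain ⟨l, hlS, hlen, hrun⟩ := spow_list act hact (S : Set M) k m hk
  obtain ⟨j₁, hj₁mem, hj₁gt⟩ := hinf.exists_gt l.length
  have hj₁' : u (j₁ + 1) = uu ∧ v (j₁ + 1) = vv := Prod.mk.injEq .. ▸ hj₁mem
  have htt := tight (j₁ + 1) l hlS (by omega)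
  rw [hj₁'.1, hj₁'.2, ← hrun uu, ← hrun vv] at htt
  linarith
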